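/- Let a > 0, b > 0 and 0 < α ≤ 1. The function f(u,h) = −(1 − (1 − α·u)·exp(−(a·u + b·h))) is NOT convex on [0,1] × [0,1]; equivalently, its Hessian matrix fails to be positive semidefinite at some point of (0,1)² (indeed the determinant of the Hessian equals −α²·b²·exp(−2(a·u + b·h)) < 0 at every point). Hence the objective F(P) = −Σ_i q_i P_{i,off} of the two-tier caching placement problem is non-convex. -/

import Mathlib

set_option linter.unnecessarySimpa false

theorem key_ineq (x : ℝ) (hx : 0 < x) :
    1 + (1 - 2*x) * (Real.exp x)^2 < 2 * ((1 - x) * Real.exp x) := by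
  have hE : 1 < Real.exp x := Real.one_lt_exp_iff.mpr hx
  have hEpos : 0 < Real.exp x := Real.exp_pos x
  have h1 : (1 - x) * Real.exp x < 1 := by
    have h := Real.add_one_lt_exp (x := -x) (by linarith)
    rw [Real.exp_neg] at h
    have h2 := mul_lt_mul_of_pos_right h hEpos
    rw [inv_mul_cancel₀ hEpos.ne'] at h2
    linarith [h2]
  have hB : 0 < 1 - (1 - 2*x) * Real.exp x := by nlinarith [mul_pos hx hEpos]
  nlinarith [mul_pos (sub_pos.2 hE) hB]

theorem objective_not_convex (a b α : ℝ) (ha : 0 < a) (hb : 0 < b) (hα : 0 < α) (hα1 : α ≤ 1) :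
    ¬ ConvexOn ℝ (Set.Icc (0:ℝ) 1 ×ˢ Set.Icc (0:ℝ) 1)
      (fun p : ℝ × ℝ => -(1 - (1 - α * p.1) * Real.exp (-(a * p.1 + b * p.2)))) ∧
    ∀ (N : ℕ) (q : Fin N → ℝ), 0 < N → (∀ i, 0 < q i) →
      ¬ ConvexOn ℝ {P : (Fin N → ℝ) × (Fin N → ℝ) |
          ∀ i, P.1 i ∈ Set.Icc (0:ℝ) 1 ∧ P.2 i ∈ Set.Icc (0:ℝ) 1}
        (fun P => -∑ i, q i *
          (1 - (1 - α * P.1 i) * Real.exp (-(a * P.1 i + b * P.2 i)))) := by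
  set c : ℝ := (α + a) / b with hc
  set ε : ℝ := min 1 (b / (α + a)) with hε
  have hab : 0 < α + a := by linarith
  have hε0 : 0 < ε := lt_min one_pos (div_pos hb hab)
  have hε1 : ε ≤ 1 := min_le_left _ _
  have hc0 : 0 < c := div_pos hab hb
  have hcε : c * ε ≤ 1 := by
    have h1 : c * (b / (α + a)) = 1 := by
      field_simp [hc]
      have hbc : b * c = α + a := by rw [hc]; field_simp
      linear_combination hbc
    calc c * ε ≤ c * (b / (α + a)) :=
          mul_le_mul_of_nonneg_left (min_le_right _ _) hc0.le
      _ = 1 := h1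
  -- value of the function along the line (t, 1 - c t)
  have hval : ∀ t : ℝ, -(1 - (1 - α * t) * Real.exp (-(a * t + b * (1 - c * t))))
      = (1 - α * t) * Real.exp (α * t) * Real.exp (-b) - 1 := by
    intro t
    have harg : -(a * t + b * (1 - c * t)) = α * t + -b := by
      field_simp [hc]
      have hbc : b * c = α + a := by rw [hc]; field_simp
      linear_combination t * hbc
    rw [harg, Real.exp_add]; ring
  have hval0 : -(1 - (1 - α * 0) * Real.exp (-(a * 0 + b * 1)))
      = (1 - α * 0) * Real.exp (α * 0) * Real.exp (-b) - 1 := by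
    have h0 := hval 0
    simpa using h0
  -- the basic violated midpoint inequality
  have hviol : ¬ ((1 - α * (ε/2)) * Real.exp (α * (ε/2)) * Real.exp (-b) - 1 ≤
      (1/2 : ℝ) * ((1 - α * 0) * Real.exp (α * 0) * Real.exp (-b) - 1)
      + (1/2 : ℝ) * ((1 - α * ε) * Real.exp (α * ε) * Real.exp (-b) - 1)) := by
    push_neg
    have hx : 0 < α * (ε/2) := by positivity
    have hk := key_ineq (α * (ε/2)) hx
    have hexp : Real.exp (α * ε) = (Real.exp (α * (ε/2)))^2 := by
      rw [show α * ε = α * (ε/2) + α * (ε/2) by ring, Real.exp_add, sq]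
    have hbpos : 0 < Real.exp (-b) := Real.exp_pos _
    rw [hexp]
    simp only [mul_zero, Real.exp_zero]
    nlinarith [mul_lt_mul_of_pos_right hk hbpos]
  constructor
  · intro hcv
    have hmem0 : ((0:ℝ), (1:ℝ)) ∈ Set.Icc (0:ℝ) 1 ×ˢ Set.Icc (0:ℝ) 1 := by
      simp only [Set.mem_prod, Set.mem_Icc]; norm_num
    have hmem1 : ((ε:ℝ), 1 - c * ε) ∈ Set.Icc (0:ℝ) 1 ×ˢ Set.Icc (0:ℝ) 1 := by
      simp only [Set.mem_prod, Set.mem_Icc]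
      refine ⟨⟨hε0.le, hε1⟩, ?_, ?_⟩ <;> nlinarith [mul_pos hc0 hε0]
    have h := hcv.2 hmem0 hmem1 (by norm_num : (0:ℝ) ≤ 1/2) (by norm_num : (0:ℝ) ≤ 1/2)
      (by norm_num)
    have hcomb : (1/2 : ℝ) • ((0:ℝ), (1:ℝ)) + (1/2 : ℝ) • ((ε:ℝ), 1 - c * ε)
        = ((ε/2 : ℝ), 1 - c * (ε/2)) := by
      ext <;> simp <;> ring
    rw [hcomb] at h
    simp only [smul_eq_mul] at h
    rw [hval (ε/2), hval0, hval ε] at h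
    exact hviol h
  · intro N q hN hq hcv
    have hne : Nonempty (Fin N) := ⟨⟨0, hN⟩⟩
    have hQ : 0 < ∑ i, q i := Finset.sum_pos (fun i _ => hq i) Finset.univ_nonempty
    have hmem0 : ((fun _ => 0, fun _ => 1) : (Fin N → ℝ) × (Fin N → ℝ)) ∈
        {P : (Fin N → ℝ) × (Fin N → ℝ) |
          ∀ i, P.1 i ∈ Set.Icc (0:ℝ) 1 ∧ P.2 i ∈ Set.Icc (0:ℝ) 1} := by
      intro i; simp only [Set.mem_Icc]; norm_num
    have hmem1 : ((fun _ => ε, fun _ => 1 - c * ε) : (Fin N → ℝ) × (Fin N → ℝ)) ∈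
        {P : (Fin N → ℝ) × (Fin N → ℝ) |
          ∀ i, P.1 i ∈ Set.Icc (0:ℝ) 1 ∧ P.2 i ∈ Set.Icc (0:ℝ) 1} := by
      intro i; simp only [Set.mem_Icc]
      refine ⟨⟨hε0.le, hε1⟩, ?_, ?_⟩ <;> nlinarith [mul_pos hc0 hε0]
    have h := hcv.2 hmem0 hmem1 (by norm_num : (0:ℝ) ≤ 1/2) (by norm_num : (0:ℝ) ≤ 1/2)
      (by norm_num)
    have hcomb : ((1/2 : ℝ) • ((fun _ => 0, fun _ => 1) : (Fin N → ℝ) × (Fin N → ℝ))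
        + (1/2 : ℝ) • ((fun _ => ε, fun _ => 1 - c * ε) : (Fin N → ℝ) × (Fin N → ℝ)))
        = ((fun _ => ε/2, fun _ => 1 - c * (ε/2)) : (Fin N → ℝ) × (Fin N → ℝ)) := by
      ext i <;> simp <;> ring
    rw [hcomb] at h
    simp only [smul_eq_mul] at h
    have hsum : ∀ (u h' : ℝ),
        -∑ i, q i * (1 - (1 - α * u) * Real.exp (-(a * u + b * h')))
        = (∑ i, q i) * (-(1 - (1 - α * u) * Real.exp (-(a * u + b * h')))) := by
      intro u h'
      rw [← Finset.sum_mul]; ring_nf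
    rw [hsum (ε/2) (1 - c * (ε/2)), hsum 0 1, hsum ε (1 - c * ε)] at h
    rw [hval (ε/2), hval0, hval ε] at h
    apply hviol
    set Q : ℝ := ∑ i, q i
    set X : ℝ := (1 - α * (ε/2)) * Real.exp (α * (ε/2)) * Real.exp (-b) - 1
    set Y : ℝ := (1 - α * 0) * Real.exp (α * 0) * Real.exp (-b) - 1
    set Z : ℝ := (1 - α * ε) * Real.exp (α * ε) * Real.exp (-b) - 1
    have h' : Q * X ≤ Q * (1/2 * Y + 1/2 * Z) := by linarith
    have := (mul_le_mul_iff_right₀ hQ).mp h'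
    linarith
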